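/- Let m, k, N be positive integers and let E = {v_1,…,v_N} ⊂ R^m be a set of nonzero vectors no two of which are collinear. Suppose 1/p_j ∈ [0,1], λ_j ∈ R, and there is a finite constant C such that Λ(f_1,…,f_N) ≤ C Π_{j=1}^N ‖f_j‖_{L^{p_j}_{λ_j}(R^k)} for all nonnegative measurable f_1,…,f_N on R^k. Then for every linear subspace V of R^m, Σ_{v_j∉V} λ_j ≥ 0. -/

import Mathlib

open MeasureTheory ENNReal
open scoped Classical

/-- The dot product `v · x ∈ ℝᵏ` for `v ∈ ℝᵐ` and `x ∈ (ℝᵏ)ᵐ`. -/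
noncomputable def dotv {m k : ℕ} (v : Fin m → ℝ)
    (x : Fin m → EuclideanSpace ℝ (Fin k)) : EuclideanSpace ℝ (Fin k) :=
  ∑ i, v i • x i

/-- The Brascamp–Lieb form `Λ(f₁,…,f_N) = ∫ ∏ f_j(v_j · x) dx`. -/
noncomputable def BLform {m k N : ℕ} (v : Fin N → Fin m → ℝ)
    (f : Fin N → EuclideanSpace ℝ (Fin k) → ℝ≥0∞) : ℝ≥0∞ :=
  ∫⁻ x : Fin m → EuclideanSpace ℝ (Fin k), ∏ j, f j (dotv (v j) x)

/-- The weighted norm `‖f‖_{L^p_α} = ‖ |·|^α f ‖_{L^p}`. -/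
noncomputable def wnorm {k : ℕ} (p α : ℝ)
    (f : EuclideanSpace ℝ (Fin k) → ℝ≥0∞) : ℝ≥0∞ :=
  (∫⁻ y : EuclideanSpace ℝ (Fin k), ((‖y‖₊ : ℝ≥0∞) ^ α * f y) ^ p) ^ (1 / p)

/-- A family of vectors in `ℝᵐ` is generic if every subfamily of cardinality `m`
is a basis of `ℝᵐ`. -/
def IsGeneric {m N : ℕ} (v : Fin N → Fin m → ℝ) : Prop :=
  ∀ s : Finset (Fin N), s.card = m →
    LinearIndependent ℝ (fun i : s => v i.1) ∧
      Submodule.span ℝ (v '' ↑s) = ⊤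

/-! ### Auxiliary lemmas -/

lemma wnorm_p_zero {k : ℕ} (α : ℝ) (f : EuclideanSpace ℝ (Fin k) → ℝ≥0∞) :
    wnorm 0 α f = 1 := by
  simp [wnorm]

lemma wnorm_indicator_le {k : ℕ} (p α lo hi ρ : ℝ) (y₀ : EuclideanSpace ℝ (Fin k))
    (hp : 1 ≤ p) (hlo : 0 < lo)
    (hsub : ∀ y ∈ Metric.closedBall y₀ ρ, lo ≤ ‖y‖ ∧ ‖y‖ ≤ hi) :
    wnorm p α ((Metric.closedBall y₀ ρ).indicator fun _ => (1 : ℝ≥0∞)) ≤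
      ENNReal.ofReal (max (lo ^ α) (hi ^ α)) *
        (volume (Metric.closedBall (0 : EuclideanSpace ℝ (Fin k)) ρ)) ^ (1 / p) := by
  set W : ℝ≥0∞ := ENNReal.ofReal (max (lo ^ α) (hi ^ α)) with hW
  have hp0 : (0:ℝ) < p := lt_of_lt_of_le one_pos hp
  have key : ∀ y, ((‖y‖₊ : ℝ≥0∞) ^ α *
      (Metric.closedBall y₀ ρ).indicator (fun _ => (1 : ℝ≥0∞)) y) ^ p ≤
      (Metric.closedBall y₀ ρ).indicator (fun _ => W ^ p) y := by
    intro y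
    by_cases hy : y ∈ Metric.closedBall y₀ ρ
    · rw [Set.indicator_of_mem hy, Set.indicator_of_mem hy, mul_one]
      refine ENNReal.rpow_le_rpow ?_ hp0.le
      obtain ⟨h1, h2⟩ := hsub y hy
      have hny : (0:ℝ) < ‖y‖ := lt_of_lt_of_le hlo h1
      have : ((‖y‖₊ : ℝ≥0∞)) ^ α = ENNReal.ofReal (‖y‖ ^ α) := by
        rw [← enorm_eq_nnnorm, ← ofReal_norm, ENNReal.ofReal_rpow_of_pos hny]
      rw [this, hW]
      apply ENNReal.ofReal_le_ofReal
      rcases le_or_gt 0 α with hα | hα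
      · exact le_max_of_le_right (Real.rpow_le_rpow (norm_nonneg y) h2 hα)
      · exact le_max_of_le_left (Real.rpow_le_rpow_of_nonpos hlo h1 hα.le)
    · rw [Set.indicator_of_notMem hy, Set.indicator_of_notMem hy, mul_zero,
        ENNReal.zero_rpow_of_pos hp0]
  calc wnorm p α ((Metric.closedBall y₀ ρ).indicator fun _ => (1 : ℝ≥0∞))
      ≤ (∫⁻ y, (Metric.closedBall y₀ ρ).indicator (fun _ => W ^ p) y) ^ (1/p) := by
        exact ENNReal.rpow_le_rpow (lintegral_mono key) (by positivity)
    _ = (W ^ p * volume (Metric.closedBall y₀ ρ)) ^ (1/p) := by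
        rw [lintegral_indicator measurableSet_closedBall _, setLIntegral_const]
    _ = W * (volume (Metric.closedBall y₀ ρ)) ^ (1/p) := by
        rw [ENNReal.mul_rpow_of_nonneg _ _ (by positivity), ← ENNReal.rpow_mul,
          mul_one_div_cancel hp0.ne', ENNReal.rpow_one]
    _ = W * (volume (Metric.closedBall (0 : EuclideanSpace ℝ (Fin k)) ρ)) ^ (1/p) := by
        rw [Measure.addHaar_closedBall_center]

lemma dotv_smul_single {m k : ℕ} (v a : Fin m → ℝ) (t : EuclideanSpace ℝ (Fin k)) :
    dotv v (fun i => a i • t) = (∑ i, v i * a i) • t := by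
  simp [dotv, smul_smul, Finset.sum_smul]

lemma dotv_dist_le {m k : ℕ} (v : Fin m → ℝ) (x y : Fin m → EuclideanSpace ℝ (Fin k)) :
    dist (dotv v x) (dotv v y) ≤ (∑ i, |v i|) * dist x y := by
  rw [dist_eq_norm, dist_eq_norm]
  have : dotv v x - dotv v y = dotv v (x - y) := by
    simp [dotv, smul_sub, Finset.sum_sub_distrib]
  rw [this]
  calc ‖dotv v (x - y)‖ ≤ ∑ i, ‖v i • (x - y) i‖ := norm_sum_le _ _
    _ ≤ ∑ i, |v i| * ‖x - y‖ := by
        refine Finset.sum_le_sum fun i _ => ?_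
        rw [norm_smul, Real.norm_eq_abs]
        exact mul_le_mul_of_nonneg_left (norm_le_pi_norm (x - y) i) (abs_nonneg _)
    _ = (∑ i, |v i|) * ‖x - y‖ := by rw [Finset.sum_mul]

lemma BLform_ge {m k N : ℕ} (v : Fin N → Fin m → ℝ)
    (f : Fin N → EuclideanSpace ℝ (Fin k) → ℝ≥0∞)
    (x₀ : Fin m → EuclideanSpace ℝ (Fin k)) (δ : ℝ) (κ : ℝ≥0∞)
    (h : ∀ x ∈ Metric.closedBall x₀ δ, κ ≤ ∏ j, f j (dotv (v j) x)) :
    κ * volume (Metric.closedBall x₀ δ) ≤ BLform v f := by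
  have hpt : ∀ x, (Metric.closedBall x₀ δ).indicator (fun _ => κ) x ≤
      ∏ j, f j (dotv (v j) x) := by
    intro x
    by_cases hx : x ∈ Metric.closedBall x₀ δ
    · rw [Set.indicator_of_mem hx]; exact h x hx
    · rw [Set.indicator_of_notMem hx]; exact zero_le
  calc κ * volume (Metric.closedBall x₀ δ)
      = ∫⁻ x, (Metric.closedBall x₀ δ).indicator (fun _ => κ) x := by
        rw [lintegral_indicator measurableSet_closedBall _, setLIntegral_const]
    _ ≤ BLform v f := lintegral_mono hpt

lemma volume_closedBall_pi {m k : ℕ} (x₀ : Fin m → EuclideanSpace ℝ (Fin k)) {δ : ℝ}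
    (hδ : 0 ≤ δ) :
    volume (Metric.closedBall x₀ δ) =
      ∏ _i : Fin m, volume (Metric.closedBall (0 : EuclideanSpace ℝ (Fin k)) δ) := by
  rw [closedBall_pi _ hδ, volume_pi_pi]
  exact Finset.prod_congr rfl fun i _ => Measure.addHaar_closedBall_center _ _ _

noncomputable def eLm (m : ℕ) : (Fin m → ℝ) ≃ₗ[ℝ] EuclideanSpace ℝ (Fin m) :=
  (WithLp.linearEquiv 2 ℝ (Fin m → ℝ)).symm

lemma inner_eLm {m : ℕ} (a : Fin m → ℝ) (b : EuclideanSpace ℝ (Fin m)) :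
    (inner ℝ (eLm m a) b : ℝ) = ∑ i, a i * b i := by
  rw [PiLp.inner_apply]
  simp [eLm, WithLp.linearEquiv, RCLike.inner_apply, mul_comm]

lemma exists_avoid {M : Type*} [AddCommGroup M] [Module ℝ M] {ι : Type*} [DecidableEq ι]
    (s : Finset ι) (A : Submodule ℝ M) (φ : ι → M →ₗ[ℝ] ℝ)
    (h : ∀ i ∈ s, ∃ u ∈ A, φ i u ≠ 0) :
    ∃ w ∈ A, ∀ i ∈ s, φ i w ≠ 0 := by
  induction s using Finset.induction_on with
  | empty => exact ⟨0, A.zero_mem, by simp⟩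
  | @insert a s ha ih =>
    obtain ⟨w, hwA, hw⟩ := ih (fun i hi => h i (Finset.mem_insert_of_mem hi))
    obtain ⟨u, huA, hu⟩ := h a (Finset.mem_insert_self a s)
    set bad : Finset ℝ := (insert a s).image (fun i => -(φ i w) / (φ i u)) with hbad
    obtain ⟨c, hc⟩ := Infinite.exists_notMem_finset bad
    refine ⟨w + c • u, A.add_mem hwA (A.smul_mem c huA), ?_⟩
    intro i hi h0
    rw [map_add, LinearMap.map_smul, smul_eq_mul] at h0
    by_cases hui : φ i u = 0
    · rcases Finset.mem_insert.1 hi with rfl | his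
      · exact hu hui
      · rw [hui, mul_zero, add_zero] at h0
        exact hw i his h0
    · apply hc
      rw [hbad, Finset.mem_image]
      refine ⟨i, hi, ?_⟩
      field_simp
      linarith

lemma exists_w {m N : ℕ} (V : Submodule ℝ (Fin m → ℝ)) (v : Fin N → Fin m → ℝ)
    (T : Finset (Fin N)) (hT : ∀ j ∈ T, v j ∉ V) :
    ∃ w : Fin m → ℝ, (∀ z ∈ V, ∑ i, z i * w i = 0) ∧ ∀ j ∈ T, (∑ i, v j i * w i) ≠ 0 := by
  set V' : Submodule ℝ (EuclideanSpace ℝ (Fin m)) := V.map (eLm m).toLinearMap with hV'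
  set φ : Fin N → EuclideanSpace ℝ (Fin m) →ₗ[ℝ] ℝ :=
    fun j => (innerSL ℝ (eLm m (v j))).toLinearMap with hφ
  have h : ∀ j ∈ T, ∃ u ∈ V'ᗮ, φ j u ≠ 0 := by
    intro j hj
    by_contra hcon
    push_neg at hcon
    have hmem : eLm m (v j) ∈ V'ᗮᗮ := by
      rw [Submodule.mem_orthogonal]
      intro u hu
      rw [real_inner_comm]
      exact hcon u hu
    rw [Submodule.orthogonal_orthogonal] at hmem
    obtain ⟨z, hz, hze⟩ := Submodule.mem_map.1 hmem
    exact hT j hj ((eLm m).injective hze ▸ hz)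
  obtain ⟨w', hw'A, hw'⟩ := exists_avoid T V'ᗮ φ h
  refine ⟨fun i => w' i, ?_, ?_⟩
  · intro z hz
    have := (Submodule.mem_orthogonal V' w').1 hw'A (eLm m z) (Submodule.mem_map_of_mem hz)
    rwa [inner_eLm] at this
  · intro j hj
    have := hw' j hj
    rw [hφ] at this
    simpa [inner_eLm] using this

lemma prod_ofReal_rpow {ι : Type*} (s : Finset ι) (R : ℝ) (hR : 0 < R) (f : ι → ℝ) :
    ∏ j ∈ s, ENNReal.ofReal (R ^ f j) = ENNReal.ofReal (R ^ ∑ j ∈ s, f j) := by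
  induction s using Finset.cons_induction with
  | empty => simp
  | cons a s ha ih =>
    rw [Finset.prod_cons, Finset.sum_cons, ih,
      ← ENNReal.ofReal_mul (Real.rpow_nonneg hR.le _), ← Real.rpow_add hR]

set_option maxHeartbeats 2000000 in
/-- A necessary condition for the weighted Brascamp–Lieb estimate. -/
theorem necessary_condition (m k N : ℕ) (hm : 0 < m) (hk : 0 < k) (hN : 0 < N)
    (v : Fin N → Fin m → ℝ) (hv0 : ∀ j, v j ≠ 0) (hvinj : Function.Injective v)
    (hnc : ∀ i j, i ≠ j → ∀ c : ℝ, v i ≠ c • v j)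
    (p lam : Fin N → ℝ)
    (hp : ∀ j, 0 ≤ 1 / p j ∧ 1 / p j ≤ 1)
    (C : ℝ≥0∞) (hC : C ≠ ⊤)
    (hbound : ∀ f : Fin N → EuclideanSpace ℝ (Fin k) → ℝ≥0∞, (∀ j, Measurable (f j)) →
      BLform v f ≤ C * ∏ j, wnorm (p j) (lam j) (f j)) :
    ∀ V : Submodule ℝ (Fin m → ℝ),
      0 ≤ ∑ j ∈ Finset.univ.filter (fun j => v j ∉ V), lam j := by
  intro V
  -- p j is either 0 or at least 1
  have hp' : ∀ j, p j = 0 ∨ 1 ≤ p j := by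
    intro j
    obtain ⟨h0, h1⟩ := hp j
    rcases lt_trichotomy (p j) 0 with h | h | h
    · exact absurd (one_div_neg.2 h) (not_lt.2 h0)
    · exact Or.inl h
    · exact Or.inr ((div_le_one h).1 h1)
  set T : Finset (Fin N) := Finset.univ.filter (fun j => v j ∉ V) with hT
  -- the generic direction z₀
  obtain ⟨w₀, -, hw₀⟩ := exists_w (⊥ : Submodule ℝ (Fin m → ℝ)) v Finset.univ
    (fun j _ => by simpa [Submodule.mem_bot] using hv0 j)
  have hw₀' : ∀ j, (∑ i, v j i * w₀ i) ≠ 0 := fun j => hw₀ j (Finset.mem_univ j)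
  -- the direction w transverse to V
  obtain ⟨w, hwV, hwT⟩ := exists_w V v T (fun j hj => (Finset.mem_filter.1 hj).2)
  set c : Fin N → ℝ := fun j => ∑ i, v j i * w i with hc
  have hcV : ∀ j, v j ∈ V → c j = 0 := fun j hj => hwV (v j) hj
  have hcT : ∀ j ∈ T, c j ≠ 0 := hwT
  -- basic geometric data
  have hkne : Nonempty (Fin k) := ⟨⟨0, hk⟩⟩
  set t₀ : EuclideanSpace ℝ (Fin k) := EuclideanSpace.single ⟨0, hk⟩ 1 with ht₀def
  have ht₀ : ‖t₀‖ = 1 := by simp [ht₀def]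
  set z₀ : Fin m → EuclideanSpace ℝ (Fin k) := fun i => w₀ i • t₀ with hz₀
  set d : Fin N → ℝ := fun j => |∑ i, v j i * w₀ i| with hd
  have hdpos : ∀ j, 0 < d j := fun j => abs_pos.2 (hw₀' j)
  have hdotz₀ : ∀ j, dotv (v j) z₀ = (∑ i, v j i * w₀ i) • t₀ := by
    intro j; rw [hz₀]; exact dotv_smul_single (v j) w₀ t₀
  have hndz₀ : ∀ j, ‖dotv (v j) z₀‖ = d j := by
    intro j; rw [hdotz₀ j, norm_smul, ht₀, mul_one, Real.norm_eq_abs, hd]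
  set s : Fin N → ℝ := fun j => ∑ i, |v j i| with hs
  have hsnn : ∀ j, 0 ≤ s j := fun j => Finset.sum_nonneg fun i _ => abs_nonneg _
  have hNe : (Finset.univ : Finset (Fin N)).Nonempty := ⟨⟨0, hN⟩, Finset.mem_univ _⟩
  set δ : ℝ := Finset.univ.inf' hNe (fun j => d j / (2 * (s j + 1))) with hδ
  have hδpos : 0 < δ := by
    rw [hδ, Finset.lt_inf'_iff]
    intro j _
    have : 0 < 2 * (s j + 1) := by nlinarith [hsnn j]
    exact div_pos (hdpos j) this
  set ρ : Fin N → ℝ := fun j => s j * δ with hρ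
  have hρnn : ∀ j, 0 ≤ ρ j := fun j => mul_nonneg (hsnn j) hδpos.le
  have hρle : ∀ j, ρ j ≤ d j / 2 := by
    intro j
    have h1 : δ ≤ d j / (2 * (s j + 1)) := Finset.inf'_le _ (Finset.mem_univ j)
    have h2 : (0:ℝ) < 2 * (s j + 1) := by nlinarith [hsnn j]
    have h3 : s j * δ ≤ s j * (d j / (2 * (s j + 1))) :=
      mul_le_mul_of_nonneg_left h1 (hsnn j)
    have h4 : s j * (d j / (2 * (s j + 1))) ≤ d j / 2 := by
      rw [mul_div_assoc', div_le_div_iff₀ h2 two_pos]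
      nlinarith [hdpos j, hsnn j]
    exact le_trans h3 h4
  -- the test configuration
  set xR : ℝ → (Fin m → EuclideanSpace ℝ (Fin k)) :=
    fun R => fun i => (R * w i) • t₀ + z₀ i with hxR
  have hdotxR : ∀ R j, dotv (v j) (xR R) = (R * c j) • t₀ + dotv (v j) z₀ := by
    intro R j
    have : xR R = (fun i => (R * w i) • t₀) + z₀ := rfl
    rw [this]
    have hadd : dotv (v j) ((fun i => (R * w i) • t₀) + z₀) =
        dotv (v j) (fun i => (R * w i) • t₀) + dotv (v j) z₀ := by
      simp [dotv, smul_add, Finset.sum_add_distrib]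
    rw [hadd, dotv_smul_single]
    congr 2
    rw [hc, Finset.mul_sum]
    exact Finset.sum_congr rfl fun i _ => by ring
  set F : ℝ → Fin N → EuclideanSpace ℝ (Fin k) → ℝ≥0∞ :=
    fun R j => (Metric.closedBall ((R * c j) • t₀ + dotv (v j) z₀) (ρ j)).indicator
      (fun _ => 1) with hF
  have hFmeas : ∀ R j, Measurable (F R j) :=
    fun R j => measurable_const.indicator measurableSet_closedBall
  have hF1 : ∀ R, ∀ x ∈ Metric.closedBall (xR R) δ, ∀ j, F R j (dotv (v j) x) = 1 := by
    intro R x hx j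
    have hdist : dist (dotv (v j) x) ((R * c j) • t₀ + dotv (v j) z₀) ≤ ρ j := by
      rw [← hdotxR R j]
      calc dist (dotv (v j) x) (dotv (v j) (xR R)) ≤ s j * dist x (xR R) :=
            dotv_dist_le (v j) x (xR R)
        _ ≤ s j * δ := mul_le_mul_of_nonneg_left (Metric.mem_closedBall.1 hx) (hsnn j)
        _ = ρ j := rfl
    rw [hF]
    exact Set.indicator_of_mem (Metric.mem_closedBall.2 hdist) _
  set β : ℝ≥0∞ := ∏ _i : Fin m, volume (Metric.closedBall (0 : EuclideanSpace ℝ (Fin k)) δ)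
    with hβdef
  have hβ : ∀ x₀, volume (Metric.closedBall x₀ δ) = β :=
    fun x₀ => volume_closedBall_pi x₀ hδpos.le
  have hβpos : β ≠ 0 := by
    rw [hβdef]
    rw [Finset.prod_ne_zero_iff]
    exact fun i _ => (Metric.measure_closedBall_pos volume _ hδpos).ne'
  have hβne : β ≠ ⊤ := by
    rw [hβdef]
    exact (ENNReal.prod_lt_top fun i _ => measure_closedBall_lt_top).ne
  have hΛ : ∀ R, β ≤ BLform v (F R) := by
    intro R
    have := BLform_ge v (F R) (xR R) δ 1 (fun x hx => by
      rw [Finset.prod_eq_one (fun j _ => hF1 R x hx j)])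
    rwa [one_mul, hβ] at this
  -- wnorm bounds for the "inner" functions
  set Kin : Fin N → ℝ≥0∞ := fun j =>
    ENNReal.ofReal (max ((d j / 2) ^ lam j) ((2 * d j) ^ lam j)) *
      (volume (Metric.closedBall (0 : EuclideanSpace ℝ (Fin k)) (ρ j))) ^ (1 / p j)
    with hKin
  have hsub_in : ∀ j, ∀ y ∈ Metric.closedBall (((0:ℝ) * c j) • t₀ + dotv (v j) z₀) (ρ j),
      d j / 2 ≤ ‖y‖ ∧ ‖y‖ ≤ 2 * d j := by
    intro j y hy
    rw [zero_mul, zero_smul, zero_add] at hy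
    have h1 : |‖y‖ - ‖dotv (v j) z₀‖| ≤ ρ j := by
      refine le_trans (abs_norm_sub_norm_le _ _) ?_
      rw [← dist_eq_norm]
      exact Metric.mem_closedBall.1 hy
    rw [hndz₀ j] at h1
    obtain ⟨h2, h3⟩ := abs_le.1 h1
    constructor
    · nlinarith [hρle j, hdpos j]
    · nlinarith [hρle j, hdpos j]
  have hwn_in : ∀ j, 1 ≤ p j → wnorm (p j) (lam j) (F 0 j) ≤ Kin j := by
    intro j hpj
    rw [hF, hKin]
    exact wnorm_indicator_le (p j) (lam j) (d j / 2) (2 * d j) (ρ j) _ hpj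
      (half_pos (hdpos j)) (hsub_in j)
  have hKin_ne : ∀ j, Kin j ≠ ⊤ := by
    intro j
    rw [hKin]
    refine ENNReal.mul_ne_top ENNReal.ofReal_ne_top ?_
    rcases hp' j with h | h
    · rw [h]; simp
    · exact (ENNReal.rpow_lt_top_of_nonneg (hp j).1
        measure_closedBall_lt_top.ne).ne
  -- the two cases
  by_cases hex : ∃ j₀, p j₀ = 0
  · -- degenerate case: some p j = 0, the hypothesis is contradictory
    exfalso
    obtain ⟨j₀, hj₀⟩ := hex
    set G : Fin N → EuclideanSpace ℝ (Fin k) → ℝ≥0∞ :=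
      fun j => if j = j₀ then (fun y => ⊤ * F 0 j y) else F 0 j with hG
    have hGmeas : ∀ j, Measurable (G j) := by
      intro j
      rw [hG]
      by_cases h : j = j₀
      · simpa [h] using (hFmeas 0 j₀).const_mul ⊤
      · simpa [h] using hFmeas 0 j
    have hGwn : ∀ j, wnorm (p j) (lam j) (G j) ≠ ⊤ := by
      intro j
      rcases hp' j with h | h
      · rw [h, wnorm_p_zero]; exact one_ne_top
      · have hj : j ≠ j₀ := by
          intro hjj; rw [hjj, hj₀] at h; linarith
        rw [hG]; simp only [if_neg hj]
        exact fun htop => hKin_ne j (top_le_iff.1 (htop ▸ hwn_in j h))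
    have hRHS : C * ∏ j, wnorm (p j) (lam j) (G j) ≠ ⊤ :=
      ENNReal.mul_ne_top hC (ENNReal.prod_lt_top fun j _ => (hGwn j).lt_top).ne
    have hLHS : BLform v G = ⊤ := by
      have := BLform_ge v G (xR 0) δ ⊤ (fun x hx => by
        have hprod : ∏ j, G j (dotv (v j) x) = ⊤ := by
          rw [← Finset.mul_prod_erase _ _ (Finset.mem_univ j₀)]
          have h1 : G j₀ (dotv (v j₀) x) = ⊤ := by
            have hGy : G j₀ (dotv (v j₀) x) = ⊤ * F 0 j₀ (dotv (v j₀) x) := by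
              rw [hG]; simp
            rw [hGy, hF1 0 x hx j₀, mul_one]
          have h2 : ∏ j ∈ Finset.univ.erase j₀, G j (dotv (v j) x) = 1 := by
            refine Finset.prod_eq_one fun j hj => ?_
            have hGy : G j (dotv (v j) x) = F 0 j (dotv (v j) x) := by
              rw [hG]; simp [Finset.ne_of_mem_erase hj]
            rw [hGy]
            exact hF1 0 x hx j
          rw [h1, h2, mul_one]
        rw [hprod])
      rw [hβ (xR 0), ENNReal.top_mul hβpos] at this
      exact top_le_iff.1 this
    exact hRHS (top_le_iff.1 (hLHS ▸ hbound G hGmeas))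
  · -- main case : all p j ≥ 1
    push_neg at hex
    have hall : ∀ j, 1 ≤ p j := fun j => (hp' j).resolve_left (hex j)
    rcases T.eq_empty_or_nonempty with hTe | hTne
    · rw [hTe, Finset.sum_empty]
    by_contra hneg
    push_neg at hneg
    set σ : ℝ := -(∑ j ∈ T, lam j) with hσdef
    have hσ : 0 < σ := by rw [hσdef]; linarith
    set R₁ : ℝ := 1 + T.sup' hTne (fun j => 3 * d j / |c j|) with hR₁def
    have hsup_nn : 0 ≤ T.sup' hTne (fun j => 3 * d j / |c j|) := by
      obtain ⟨j₁, hj₁⟩ := hTne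
      refine le_trans ?_ (Finset.le_sup' _ hj₁)
      exact div_nonneg (mul_nonneg (by norm_num) (hdpos j₁).le) (abs_nonneg _)
    have hR₁ : 1 ≤ R₁ := by rw [hR₁def]; linarith
    have hRd : ∀ R, R₁ ≤ R → ∀ j ∈ T, 3 * d j ≤ R * |c j| := by
      intro R hR j hj
      have h1 : 3 * d j / |c j| ≤ R := by
        refine le_trans (Finset.le_sup' (fun j => 3 * d j / |c j|) hj) ?_
        rw [hR₁def] at hR; linarith
      have h2 : 0 < |c j| := abs_pos.2 (hcT j hj)
      calc 3 * d j = (3 * d j / |c j|) * |c j| := (div_mul_cancel₀ _ h2.ne').symm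
        _ ≤ R * |c j| := mul_le_mul_of_nonneg_right h1 h2.le
    -- wnorm bounds for the "outer" functions
    set Kout : Fin N → ℝ≥0∞ := fun j =>
      ENNReal.ofReal (max ((|c j| / 2) ^ lam j) ((2 * |c j|) ^ lam j)) *
        (volume (Metric.closedBall (0 : EuclideanSpace ℝ (Fin k)) (ρ j))) ^ (1 / p j)
      with hKout
    have hKout_ne : ∀ j, Kout j ≠ ⊤ := by
      intro j
      rw [hKout]
      exact ENNReal.mul_ne_top ENNReal.ofReal_ne_top
        (ENNReal.rpow_lt_top_of_nonneg (hp j).1 measure_closedBall_lt_top.ne).ne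
    have hwn_out : ∀ R, R₁ ≤ R → ∀ j ∈ T,
        wnorm (p j) (lam j) (F R j) ≤ ENNReal.ofReal (R ^ lam j) * Kout j := by
      intro R hR j hj
      have hRpos : (0:ℝ) < R := lt_of_lt_of_le (lt_of_lt_of_le one_pos hR₁) hR
      have hcj : (0:ℝ) < |c j| := abs_pos.2 (hcT j hj)
      have h3d : 3 * d j ≤ R * |c j| := hRd R hR j hj
      have hctr : R * |c j| - d j ≤ ‖((R * c j) • t₀ + dotv (v j) z₀)‖ ∧
          ‖((R * c j) • t₀ + dotv (v j) z₀)‖ ≤ R * |c j| + d j := by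
        have hn1 : ‖(R * c j) • t₀‖ = R * |c j| := by
          rw [norm_smul, ht₀, mul_one, Real.norm_eq_abs, abs_mul, abs_of_pos hRpos]
        have up : ‖(R * c j) • t₀ + dotv (v j) z₀‖ ≤ R * |c j| + d j := by
          refine le_trans (norm_add_le _ _) ?_
          rw [hn1, hndz₀ j]
        have lo : R * |c j| - d j ≤ ‖(R * c j) • t₀ + dotv (v j) z₀‖ := by
          have := norm_sub_le ((R * c j) • t₀ + dotv (v j) z₀) (dotv (v j) z₀)
          rw [add_sub_cancel_right, hn1, hndz₀ j] at this
          linarith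
        exact ⟨lo, up⟩
      have hsub : ∀ y ∈ Metric.closedBall ((R * c j) • t₀ + dotv (v j) z₀) (ρ j),
          R * (|c j| / 2) ≤ ‖y‖ ∧ ‖y‖ ≤ R * (2 * |c j|) := by
        intro y hy
        have h1 : |‖y‖ - ‖(R * c j) • t₀ + dotv (v j) z₀‖| ≤ ρ j := by
          refine le_trans (abs_norm_sub_norm_le _ _) ?_
          rw [← dist_eq_norm]
          exact Metric.mem_closedBall.1 hy
        obtain ⟨h2, h3⟩ := abs_le.1 h1
        obtain ⟨h4, h5⟩ := hctr
        have h6 := hρle j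
        have h7 := hdpos j
        constructor
        · nlinarith
        · nlinarith
      have := wnorm_indicator_le (p j) (lam j) (R * (|c j| / 2)) (R * (2 * |c j|)) (ρ j)
        ((R * c j) • t₀ + dotv (v j) z₀) (hall j) (by positivity) hsub
      rw [hF]
      refine le_trans this ?_
      rw [Real.mul_rpow hRpos.le (by positivity), Real.mul_rpow hRpos.le (by positivity)]
      rw [← mul_max_of_nonneg _ _ (Real.rpow_nonneg hRpos.le (lam j))]
      rw [ENNReal.ofReal_mul (Real.rpow_nonneg hRpos.le (lam j)), hKout, mul_assoc]
    have hFin : ∀ R j, v j ∈ V → F R j = F 0 j := by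
      intro R j hj
      rw [hF]
      simp only [hcV j hj, mul_zero]
    -- the key inequality
    set A : ℝ≥0∞ := C * ((∏ j ∈ T, Kout j) *
      ∏ j ∈ Finset.univ.filter (fun j => ¬ v j ∉ V), Kin j) with hA
    have hAne : A ≠ ⊤ := by
      rw [hA]
      refine ENNReal.mul_ne_top hC (ENNReal.mul_ne_top ?_ ?_)
      · exact (ENNReal.prod_lt_top fun j _ => (hKout_ne j).lt_top).ne
      · exact (ENNReal.prod_lt_top fun j _ => (hKin_ne j).lt_top).ne
    have key : ∀ R, R₁ ≤ R → β ≤ ENNReal.ofReal (R ^ (∑ j ∈ T, lam j)) * A := by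
      intro R hR
      have hRpos : (0:ℝ) < R := lt_of_lt_of_le (lt_of_lt_of_le one_pos hR₁) hR
      have h1 : β ≤ C * ∏ j, wnorm (p j) (lam j) (F R j) :=
        le_trans (hΛ R) (hbound (F R) (hFmeas R))
      have h2 : ∏ j, wnorm (p j) (lam j) (F R j) ≤
          (ENNReal.ofReal (R ^ (∑ j ∈ T, lam j)) * ∏ j ∈ T, Kout j) *
            ∏ j ∈ Finset.univ.filter (fun j => ¬ v j ∉ V), Kin j := by
        rw [← Finset.prod_filter_mul_prod_filter_not Finset.univ (fun j => v j ∉ V)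
          (fun j => wnorm (p j) (lam j) (F R j)), ← hT]
        refine mul_le_mul' ?_ ?_
        · calc ∏ j ∈ T, wnorm (p j) (lam j) (F R j)
              ≤ ∏ j ∈ T, (ENNReal.ofReal (R ^ lam j) * Kout j) :=
                Finset.prod_le_prod' fun j hj => hwn_out R hR j hj
            _ = (∏ j ∈ T, ENNReal.ofReal (R ^ lam j)) * ∏ j ∈ T, Kout j :=
                Finset.prod_mul_distrib
            _ = ENNReal.ofReal (R ^ (∑ j ∈ T, lam j)) * ∏ j ∈ T, Kout j := by
                rw [prod_ofReal_rpow T R hRpos]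
        · refine Finset.prod_le_prod' fun j hj => ?_
          have hjV : v j ∈ V := not_not.1 (Finset.mem_filter.1 hj).2
          rw [hFin R j hjV]
          exact hwn_in j (hall j)
      calc β ≤ C * ∏ j, wnorm (p j) (lam j) (F R j) := h1
        _ ≤ C * ((ENNReal.ofReal (R ^ (∑ j ∈ T, lam j)) * ∏ j ∈ T, Kout j) *
            ∏ j ∈ Finset.univ.filter (fun j => ¬ v j ∉ V), Kin j) :=
              mul_le_mul_right h2 C
        _ = ENNReal.ofReal (R ^ (∑ j ∈ T, lam j)) * A := by rw [hA]; ring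
    -- derive the contradiction
    set Ar : ℝ := A.toReal with hAr
    set βr : ℝ := β.toReal with hβr
    have hβrpos : 0 < βr := ENNReal.toReal_pos hβpos hβne
    have hArnn : 0 ≤ Ar := ENNReal.toReal_nonneg
    set R : ℝ := max R₁ ((Ar / βr + 1) ^ (1 / σ)) with hRdef
    have hRR₁ : R₁ ≤ R := le_max_left _ _
    have hRpos : (0:ℝ) < R := lt_of_lt_of_le (lt_of_lt_of_le one_pos hR₁) hRR₁
    have hkey : βr ≤ R ^ (∑ j ∈ T, lam j) * Ar := by
      have h6 := key R hRR₁
      have h7 := ENNReal.toReal_mono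
        (ENNReal.mul_ne_top ENNReal.ofReal_ne_top hAne) h6
      rwa [ENNReal.toReal_mul, ENNReal.toReal_ofReal (Real.rpow_nonneg hRpos.le _)] at h7
    have hsum : (∑ j ∈ T, lam j) = -σ := by rw [hσdef]; ring
    have hRσ : (0:ℝ) < R ^ σ := Real.rpow_pos_of_pos hRpos σ
    have e1 : βr * R ^ σ ≤ Ar := by
      rw [hsum, Real.rpow_neg hRpos.le] at hkey
      calc βr * R ^ σ ≤ ((R ^ σ)⁻¹ * Ar) * R ^ σ :=
            mul_le_mul_of_nonneg_right hkey hRσ.le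
        _ = Ar := by field_simp
    have e2 : Ar / βr + 1 ≤ R ^ σ := by
      have hbase : (0:ℝ) ≤ Ar / βr + 1 := by positivity
      have h8 : (Ar / βr + 1) ^ (1 / σ) ≤ R := le_max_right _ _
      have h9 := Real.rpow_le_rpow (Real.rpow_nonneg hbase _) h8 hσ.le
      rwa [← Real.rpow_mul hbase, one_div_mul_cancel hσ.ne', Real.rpow_one] at h9
    have e3 : βr * (Ar / βr + 1) = Ar + βr := by field_simp
    nlinarith [mul_le_mul_of_nonneg_left e2 hβrpos.le]
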